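/- Fix integers α_1 > α_2 > ⋯ > α_N ≥ 1 and m_1, …, m_N ≥ 1, and set n := Σ_r α_r m_r. If M ∈ ℂ^{n×n} has form (0T0) and the leading Toeplitz coefficient of every diagonal block vanishes (A^{rr}_0 = 0 for all r = 1, …, N), then M is nilpotent; in particular M^n = 0. Consequently, every matrix U of form (0T0) whose diagonal blocks have leading Toeplitz coefficient A^{rr}_0 = I_{m_r} for all r is unipotent: (U − I_n)^n = 0. -/

import Mathlib

open Matrix

noncomputable section

/-- Form (0T0): block matrix partitioned by Jordan structure `(α, m)` whose `(r,s)` block,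
viewed as an `α r × α s` array of `m r × m s` blocks, is a rectangular block
upper-triangular Toeplitz matrix aligned to the top-right corner. -/
def IsForm0T0 {N : ℕ} (α m : Fin N → ℕ)
    (X : Matrix (Σ r : Fin N, Fin (α r) × Fin (m r)) (Σ r : Fin N, Fin (α r) × Fin (m r)) ℂ) :
    Prop :=
  ∃ A : ∀ r s : Fin N, ℕ → Matrix (Fin (m r)) (Fin (m s)) ℂ,
    ∀ (r s : Fin N) (i : Fin (α r)) (j : Fin (α s)) (a : Fin (m r)) (b : Fin (m s)),
      X ⟨r, (i, a)⟩ ⟨s, (j, b)⟩ =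
        if (i : ℕ) + (α s - min (α r) (α s)) ≤ (j : ℕ) then
          A r s ((j : ℕ) - (i : ℕ) - (α s - min (α r) (α s))) a b
        else 0

/-- `E_b(I_m)`: the `bm × bm` block matrix with `I_m` on the block anti-diagonal. -/
def revE (b m : ℕ) : Matrix (Fin b × Fin m) (Fin b × Fin m) ℂ :=
  Matrix.of fun p q => if (p.1 : ℕ) + (q.1 : ℕ) + 1 = b ∧ p.2 = q.2 then 1 else 0

/-- `F = ⊕_r E_{α r}(I_{m r})`. -/
def bigF {N : ℕ} (α m : Fin N → ℕ) :
    Matrix (Σ r : Fin N, Fin (α r) × Fin (m r)) (Σ r : Fin N, Fin (α r) × Fin (m r)) ℂ :=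
  Matrix.blockDiagonal' fun r => revE (α r) (m r)

/-- The `n × n` upper-triangular Jordan block `J_n(λ)`. -/
def Jmat (n : ℕ) (lam : ℂ) : Matrix (Fin n) (Fin n) ℂ :=
  Matrix.of fun i j => if (j : ℕ) = (i : ℕ) then lam else if (j : ℕ) = (i : ℕ) + 1 then 1 else 0

/-- The `n × n` backward identity matrix `E_n`. -/
def ErevC (n : ℕ) : Matrix (Fin n) (Fin n) ℂ :=
  Matrix.of fun i j => if (i : ℕ) + (j : ℕ) + 1 = n then 1 else 0

/-- `P_n = (1/√2)(I + i E_n)`. -/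
noncomputable def Pmat (n : ℕ) : Matrix (Fin n) (Fin n) ℂ :=
  (Real.sqrt 2 : ℂ)⁻¹ • (1 + Complex.I • ErevC n)

/-- `P_n⁻¹ = (1/√2)(I − i E_n)`. -/
noncomputable def PmatInv (n : ℕ) : Matrix (Fin n) (Fin n) ℂ :=
  (Real.sqrt 2 : ℂ)⁻¹ • (1 - Complex.I • ErevC n)

/-- The symmetric canonical form `K_n(λ) = P_n J_n(λ) P_n⁻¹` of a Jordan block. -/
noncomputable def Kmat (n : ℕ) (lam : ℂ) : Matrix (Fin n) (Fin n) ℂ :=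
  Pmat n * Jmat n lam * PmatInv n

/-- `T(A_0, …)`: the `β × β` block upper-triangular Toeplitz matrix with blocks `A_j`. -/
def blkToeplitz (β p q : ℕ) (A : ℕ → Matrix (Fin p) (Fin q) ℂ) :
    Matrix (Fin β × Fin p) (Fin β × Fin q) ℂ :=
  Matrix.of fun x y =>
    if (x.1 : ℕ) ≤ (y.1 : ℕ) then A ((y.1 : ℕ) - (x.1 : ℕ)) x.2 y.2 else 0

/-- The `(i,i)`-th `m r × m r` entry-block of the `(r,r)` diagonal block of `X`; for a
matrix of form (0T0) this is the leading Toeplitz coefficient `A^{rr}_0`. -/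
def diagLead {N : ℕ} (α m : Fin N → ℕ)
    (X : Matrix (Σ r : Fin N, Fin (α r) × Fin (m r)) (Σ r : Fin N, Fin (α r) × Fin (m r)) ℂ)
    (r : Fin N) (i : Fin (α r)) : Matrix (Fin (m r)) (Fin (m r)) ℂ :=
  Matrix.of fun a b => X ⟨r, (i, a)⟩ ⟨r, (i, b)⟩

/-- The space of skew-symmetric matrices commuting with `S`. -/
def skewCommSubmodule (ι : Type*) [Fintype ι] [DecidableEq ι] (S : Matrix ι ι ℂ) :
    Submodule ℂ (Matrix ι ι ℂ) where
  carrier := {X | Xᵀ = -X ∧ X * S = S * X}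
  add_mem' := by
    rintro a b ⟨ha1, ha2⟩ ⟨hb1, hb2⟩
    refine ⟨?_, ?_⟩
    · rw [Matrix.transpose_add, ha1, hb1, neg_add]
    · rw [add_mul, mul_add, ha2, hb2]
  zero_mem' := by
    refine ⟨?_, ?_⟩
    · simp
    · simp
  smul_mem' := by
    rintro c a ⟨h1, h2⟩
    refine ⟨?_, ?_⟩
    · rw [Matrix.transpose_smul, h1, smul_neg]
    · rw [Matrix.smul_mul, Matrix.mul_smul, h2]

/-- The isotropy group (as a set) of `S` under orthogonal similarity. -/
def sigmaSet {ι : Type*} [Fintype ι] [DecidableEq ι] (S : Matrix ι ι ℂ) : Set (Matrix ι ι ℂ) :=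
  {Q | Qᵀ * Q = 1 ∧ Qᵀ * S * Q = S}

/-- A matrix whose support is strictly increasing along a weight `f : ι → ℤ` is
nilpotent, with nilpotency index at most `Fintype.card ι`. -/
lemma pow_card_eq_zero_of_lt {ι : Type*} [Fintype ι] [DecidableEq ι]
    (M : Matrix ι ι ℂ) (f : ι → ℤ)
    (h : ∀ x y, M x y ≠ 0 → f x < f y) :
    M ^ Fintype.card ι = 0 := by
  classical
  set g : ι → ℕ := fun x => ((Finset.univ.image f).filter (fun b => b < f x)).card with hg
  have hmono : ∀ x y : ι, f x < f y → g x < g y := by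
    intro x y hxy
    apply Finset.card_lt_card
    rw [Finset.ssubset_def]
    constructor
    · intro b hb
      simp only [Finset.mem_filter] at hb ⊢
      exact ⟨hb.1, hb.2.trans hxy⟩
    · intro hcon
      have hx : f x ∈ (Finset.univ.image f).filter (fun b => b < f y) := by
        simp only [Finset.mem_filter, Finset.mem_image]
        exact ⟨⟨x, Finset.mem_univ x, rfl⟩, hxy⟩
      have hbad := hcon hx
      simp only [Finset.mem_filter] at hbad
      exact lt_irrefl _ hbad.2
  have hbound : ∀ y : ι, g y < Fintype.card ι := by
    intro y
    have h1 : g y < (Finset.univ.image f).card := by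
      apply Finset.card_lt_card
      rw [Finset.ssubset_def]
      refine ⟨Finset.filter_subset _ _, fun hcon => ?_⟩
      have hy : f y ∈ Finset.univ.image f := Finset.mem_image_of_mem f (Finset.mem_univ y)
      have hbad := hcon hy
      simp only [Finset.mem_filter] at hbad
      exact lt_irrefl _ hbad.2
    calc g y < (Finset.univ.image f).card := h1
      _ ≤ Finset.univ.card := Finset.card_image_le
      _ = Fintype.card ι := Finset.card_univ
  have key : ∀ k (x y : ι), (M ^ k) x y ≠ 0 → g x + k ≤ g y := by
    intro k
    induction k with
    | zero =>
      intro x y hxy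
      rw [pow_zero] at hxy
      rcases eq_or_ne x y with rfl | hne
      · omega
      · rw [Matrix.one_apply_ne hne] at hxy; exact absurd rfl hxy
    | succ k ih =>
      intro x y hxy
      rw [pow_succ, Matrix.mul_apply] at hxy
      obtain ⟨z, -, hz⟩ := Finset.exists_ne_zero_of_sum_ne_zero hxy
      have h1 : (M ^ k) x z ≠ 0 := left_ne_zero_of_mul hz
      have h2 : M z y ≠ 0 := right_ne_zero_of_mul hz
      have e1 := ih x z h1
      have e2 := hmono z y (h z y h2)
      omega
  ext x y
  rw [Matrix.zero_apply]
  by_contra hxy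
  have e1 := key (Fintype.card ι) x y hxy
  have e2 := hbound y
  omega

/-- The weight strictly increases across the support of a matrix of form (0T0)
with vanishing leading diagonal Toeplitz coefficients. -/
lemma entry_lt0T0 {N : ℕ} {α : Fin N → ℕ} (hαa : StrictAnti α) (r s : Fin N)
    (i : Fin (α r)) (j : Fin (α s))
    (hc : (i : ℕ) + (α s - min (α r) (α s)) ≤ (j : ℕ))
    (hne : r ≠ s ∨ (i : ℕ) ≠ (j : ℕ)) :
    (N : ℤ) * ((i : ℤ) - α r) - r < (N : ℤ) * ((j : ℤ) - α s) - s := by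
  have hrN : (r : ℕ) < N := r.isLt
  have hsN : (s : ℕ) < N := s.isLt
  have hN0 : (0 : ℤ) ≤ N := Int.natCast_nonneg N
  rcases lt_trichotomy (α r) (α s) with hlt | heq | hgt
  · -- α r < α s : then s < r and the weight is nonincreasing
    have hsr : s < r := hαa.lt_iff_gt.mp hlt
    have hmin : min (α r) (α s) = α r := min_eq_left hlt.le
    rw [hmin] at hc
    have hd : (i : ℤ) - α r ≤ (j : ℤ) - α s := by omega
    have hmul : (N : ℤ) * ((i : ℤ) - α r) ≤ (N : ℤ) * ((j : ℤ) - α s) :=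
      mul_le_mul_of_nonneg_left hd hN0
    have hsr' : (s : ℤ) < r := by exact_mod_cast hsr
    linarith
  · -- α r = α s : then r = s and i < j
    have hrs : r = s := hαa.injective heq
    subst hrs
    simp only [min_self, Nat.sub_self, add_zero] at hc
    have hij : (i : ℕ) ≠ (j : ℕ) := hne.resolve_left (fun h => h rfl)
    have hd : (i : ℤ) - α r + 1 ≤ (j : ℤ) - α r := by omega
    have hmul := mul_le_mul_of_nonneg_left hd hN0
    rw [mul_add, mul_one] at hmul
    have hN1 : (1 : ℤ) ≤ N := by exact_mod_cast Nat.one_le_iff_ne_zero.mpr (by omega)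
    linarith
  · -- α s < α r : then i ≤ j and the weight strictly decreases
    have hmin : min (α r) (α s) = α s := min_eq_right hgt.le
    rw [hmin, Nat.sub_self, add_zero] at hc
    have hgt' : (α s : ℤ) < α r := by exact_mod_cast hgt
    have hd : (i : ℤ) - α r + 1 ≤ (j : ℤ) - α s := by omega
    have hmul := mul_le_mul_of_nonneg_left hd hN0
    rw [mul_add, mul_one] at hmul
    have hs' : (s : ℤ) < N := by exact_mod_cast hsN
    linarith

/-- A matrix of form (0T0) whose diagonal blocks have vanishing leading
Toeplitz coefficient is nilpotent (`M^n = 0` for `n` the size); consequently any matrix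
of form (0T0) whose diagonal blocks have leading Toeplitz coefficient `I` is unipotent:
`(U − 1)^n = 0`. -/
theorem stmt8 (N : ℕ) (α m : Fin N → ℕ)
    (hαa : StrictAnti α) (hα1 : ∀ r, 0 < α r) (hm : ∀ r, 0 < m r) :
    (∀ M : Matrix (Σ r : Fin N, Fin (α r) × Fin (m r))
        (Σ r : Fin N, Fin (α r) × Fin (m r)) ℂ,
      IsForm0T0 α m M →
      (∀ (r : Fin N) (i : Fin (α r)) (a b : Fin (m r)), M ⟨r, (i, a)⟩ ⟨r, (i, b)⟩ = 0) →
      M ^ (∑ r : Fin N, α r * m r) = 0) ∧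
    (∀ U : Matrix (Σ r : Fin N, Fin (α r) × Fin (m r))
        (Σ r : Fin N, Fin (α r) × Fin (m r)) ℂ,
      IsForm0T0 α m U →
      (∀ (r : Fin N) (i : Fin (α r)) (a b : Fin (m r)),
        U ⟨r, (i, a)⟩ ⟨r, (i, b)⟩ = if a = b then 1 else 0) →
      (U - 1) ^ (∑ r : Fin N, α r * m r) = 0) := by
  have hcard : Fintype.card (Σ r : Fin N, Fin (α r) × Fin (m r)) = ∑ r : Fin N, α r * m r := by
    simp [Fintype.card_sigma]
  set f : (Σ r : Fin N, Fin (α r) × Fin (m r)) → ℤ :=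
    fun x => (N : ℤ) * ((x.2.1 : ℤ) - α x.1) - x.1 with hf
  constructor
  · rintro M ⟨A, hA⟩ hdiag
    rw [← hcard]
    apply pow_card_eq_zero_of_lt M f
    rintro ⟨r, i, a⟩ ⟨s, j, b⟩ hM
    have hform := hA r s i j a b
    by_cases hc : (i : ℕ) + (α s - min (α r) (α s)) ≤ (j : ℕ)
    · have hne : r ≠ s ∨ (i : ℕ) ≠ (j : ℕ) := by
        by_contra hcon
        push_neg at hcon
        obtain ⟨rfl, hij⟩ := hcon
        have hij' : i = j := Fin.ext hij
        subst hij'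
        exact hM (hdiag r i a b)
      exact entry_lt0T0 hαa r s i j hc hne
    · rw [hform, if_neg hc] at hM
      exact (hM rfl).elim
  · rintro U ⟨A, hA⟩ hU
    rw [← hcard]
    apply pow_card_eq_zero_of_lt (U - 1) f
    rintro ⟨r, i, a⟩ ⟨s, j, b⟩ hM
    rw [Matrix.sub_apply] at hM
    by_cases hxy : (⟨r, (i, a)⟩ : Σ r : Fin N, Fin (α r) × Fin (m r)) = ⟨s, (j, b)⟩
    · exfalso
      rw [← hxy] at hM
      rw [Matrix.one_apply_eq, hU r i a a, if_pos rfl, sub_self] at hM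
      exact (hM rfl).elim
    · rw [Matrix.one_apply_ne hxy, sub_zero] at hM
      have hform := hA r s i j a b
      by_cases hc : (i : ℕ) + (α s - min (α r) (α s)) ≤ (j : ℕ)
      · have hne : r ≠ s ∨ (i : ℕ) ≠ (j : ℕ) := by
          by_contra hcon
          push_neg at hcon
          obtain ⟨rfl, hij⟩ := hcon
          have hij' : i = j := Fin.ext hij
          subst hij'
          have hab : a ≠ b := by rintro rfl; exact hxy rfl
          rw [hU r i a b, if_neg hab] at hM
          exact (hM rfl).elim
        exact entry_lt0T0 hαa r s i j hc hne
      · rw [hform, if_neg hc] at hM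
        exact (hM rfl).elim
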